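/- Let ν > 0 and define F(m) = ν⁻¹ · (Γ(ν+1/2)/(√π Γ(ν))) · Γ(m+2ν)/(Γ(m+1)Γ(2ν)) for m ∈ [1,∞). Then for each α ∈ ℕ there exists C > 0 such that |∂ₘ^α F(m)| ≤ C m^{2ν-1-α} for all m ≥ 1. -/

import Mathlib

/-- `F(m) = ν⁻¹ (Γ(ν+1/2)/(√π Γ(ν))) Γ(m+2ν)/(Γ(m+1)Γ(2ν))`. -/
noncomputable def Fnu (ν : ℝ) (m : ℝ) : ℝ :=
  ν⁻¹ * (Real.Gamma (ν + 1 / 2) / (Real.sqrt Real.pi * Real.Gamma ν)) *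
    (Real.Gamma (m + 2 * ν) / (Real.Gamma (m + 1) * Real.Gamma (2 * ν)))

open MeasureTheory Set Filter

namespace FnuAux


lemma log_pow_le {k : ℕ} {ε t : ℝ} (hε : 0 < ε) (ht : 0 < t) (ht1 : t ≤ 1) :
    |Real.log t| ^ k ≤ (k.factorial / ε ^ k) * t ^ (-ε) := by
  set x : ℝ := -Real.log t with hx
  have hx0 : 0 ≤ x := by
    simp only [hx, neg_nonneg]
    exact Real.log_nonpos ht.le ht1
  have habs : |Real.log t| = x := by
    rw [abs_of_nonpos (Real.log_nonpos ht.le ht1)]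
  have ht' : t ^ (-ε) = Real.exp (ε * x) := by
    rw [← Real.exp_log ht, ← Real.exp_mul]
    ring_nf
    rw [hx]; ring_nf
  have key : (ε * x) ^ k / k.factorial ≤ Real.exp (ε * x) :=
    Real.pow_div_factorial_le_exp _ (by positivity) k
  rw [habs, ht']
  have hεk : (0:ℝ) < ε ^ k := by positivity
  rw [mul_pow] at key
  have hfac : (0:ℝ) < k.factorial := by positivity
  rw [div_le_iff₀ hfac] at key
  rw [div_mul_eq_mul_div, le_div_iff₀ hεk]
  calc x ^ k * ε ^ k = ε ^ k * x ^ k := by ring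
    _ ≤ Real.exp (ε * x) * k.factorial := key
    _ = k.factorial * Real.exp (ε * x) := by ring

lemma betaIntegrable {a b : ℝ} (ha : -1 < a) (hb : -1 < b) :
    IntegrableOn (fun t : ℝ => t ^ a * (1 - t) ^ b) (Ioo (0:ℝ) 1) := by
  have h := (Complex.betaIntegral_convergent (u := ((a+1 : ℝ) : ℂ)) (v := ((b+1 : ℝ) : ℂ))
    (by simp; linarith) (by simp; linarith))
  rw [intervalIntegrable_iff_integrableOn_Ioc_of_le zero_le_one] at h
  have h' : IntegrableOn (fun x : ℝ => ‖(x:ℂ) ^ (((a+1:ℝ):ℂ) - 1) * (1 - (x:ℂ)) ^ (((b+1:ℝ):ℂ) - 1)‖)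
      (Ioo (0:ℝ) 1) := IntegrableOn.mono_set (h.norm) Ioo_subset_Ioc_self
  refine h'.congr_fun (fun x hx => ?_) measurableSet_Ioo
  have hx0 : (0:ℝ) < x := hx.1
  have hx1 : (0:ℝ) < 1 - x := by linarith [hx.2]
  show ‖_‖ = _
  rw [norm_mul,
    Complex.norm_cpow_eq_rpow_re_of_pos hx0, ]
  have h1 : (1 - (x:ℂ)) = (((1 - x : ℝ)):ℂ) := by push_cast; ring
  rw [h1, Complex.norm_cpow_eq_rpow_re_of_pos hx1]
  norm_num



lemma contOn_kernel (a b : ℝ) (k : ℕ) :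
    ContinuousOn (fun t : ℝ => t ^ a * Real.log t ^ k * (1 - t) ^ b) (Ioo (0:ℝ) 1) := by
  intro t ht
  have h1 : ContinuousAt (fun t : ℝ => t ^ a) t :=
    Real.continuousAt_rpow_const t a (Or.inl ht.1.ne')
  have h2 : ContinuousAt (fun t : ℝ => Real.log t ^ k) t :=
    (Real.continuousAt_log ht.1.ne').pow k
  have h3 : ContinuousAt (fun t : ℝ => (1 - t) ^ b) t := by
    have : ContinuousAt (fun t : ℝ => (1 : ℝ) - t) t := (continuous_const.sub continuous_id).continuousAt
    exact (Real.continuousAt_rpow_const (1 - t) b (Or.inl (by linarith [ht.2]))).comp this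
  exact ((h1.mul h2).mul h3).continuousWithinAt

lemma contOn_kernel_abs (a b : ℝ) (k : ℕ) :
    ContinuousOn (fun t : ℝ => t ^ a * |Real.log t| ^ k * (1 - t) ^ b) (Ioo (0:ℝ) 1) := by
  intro t ht
  have h1 : ContinuousAt (fun t : ℝ => t ^ a) t :=
    Real.continuousAt_rpow_const t a (Or.inl ht.1.ne')
  have h2 : ContinuousAt (fun t : ℝ => |Real.log t| ^ k) t :=
    ((Real.continuousAt_log ht.1.ne').abs).pow k
  have h3 : ContinuousAt (fun t : ℝ => (1 - t) ^ b) t := by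
    have : ContinuousAt (fun t : ℝ => (1 : ℝ) - t) t := (continuous_const.sub continuous_id).continuousAt
    exact (Real.continuousAt_rpow_const (1 - t) b (Or.inl (by linarith [ht.2]))).comp this
  exact ((h1.mul h2).mul h3).continuousWithinAt

lemma kernel_integrable_abs {a b : ℝ} (ha : -1 < a) (hb : -1 < b) (k : ℕ) :
    IntegrableOn (fun t : ℝ => t ^ a * |Real.log t| ^ k * (1 - t) ^ b) (Ioo (0:ℝ) 1) := by
  set ε : ℝ := (a + 1) / 2 with hε
  have hε0 : 0 < ε := by rw [hε]; linarith
  have ha' : -1 < a - ε := by rw [hε]; linarith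
  have hint : IntegrableOn (fun t : ℝ => (k.factorial / ε ^ k) * (t ^ (a - ε) * (1 - t) ^ b))
      (Ioo (0:ℝ) 1) := (betaIntegrable ha' hb).const_mul _
  refine Integrable.mono hint ((contOn_kernel_abs a b k).aestronglyMeasurable measurableSet_Ioo) ?_
  rw [ae_restrict_iff' measurableSet_Ioo]
  filter_upwards with t
  intro ht
  have ht0 := ht.1; have ht1 := ht.2
  have hb0 : (0:ℝ) ≤ (1 - t) ^ b := Real.rpow_nonneg (by linarith) b
  have ha0 : (0:ℝ) ≤ t ^ a := Real.rpow_nonneg ht0.le a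
  rw [Real.norm_eq_abs, Real.norm_eq_abs]
  rw [abs_of_nonneg (by positivity)]
  have key : t ^ a * |Real.log t| ^ k ≤ (k.factorial / ε ^ k) * t ^ (a - ε) := by
    calc t ^ a * |Real.log t| ^ k ≤ t ^ a * ((k.factorial / ε ^ k) * t ^ (-ε)) := by
          apply mul_le_mul_of_nonneg_left (log_pow_le hε0 ht0 ht1.le) ha0
      _ = (k.factorial / ε ^ k) * (t ^ a * t ^ (-ε)) := by ring
      _ = (k.factorial / ε ^ k) * t ^ (a - ε) := by
          rw [← Real.rpow_add ht0]; ring_nf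
  have : t ^ a * |Real.log t| ^ k * (1 - t) ^ b ≤ (k.factorial / ε ^ k) * (t ^ (a - ε) * (1 - t) ^ b) := by
    calc t ^ a * |Real.log t| ^ k * (1 - t) ^ b
        ≤ ((k.factorial / ε ^ k) * t ^ (a - ε)) * (1 - t) ^ b := mul_le_mul_of_nonneg_right key hb0
      _ = (k.factorial / ε ^ k) * (t ^ (a - ε) * (1 - t) ^ b) := by ring
  refine this.trans (le_abs_self _)

lemma kernel_integrable {a b : ℝ} (ha : -1 < a) (hb : -1 < b) (k : ℕ) :
    IntegrableOn (fun t : ℝ => t ^ a * Real.log t ^ k * (1 - t) ^ b) (Ioo (0:ℝ) 1) := by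
  refine Integrable.mono (kernel_integrable_abs ha hb k)
    ((contOn_kernel a b k).aestronglyMeasurable measurableSet_Ioo) ?_
  rw [ae_restrict_iff' measurableSet_Ioo]
  filter_upwards with t
  intro ht
  rw [Real.norm_eq_abs, Real.norm_eq_abs, abs_mul, abs_mul, abs_mul, abs_mul, abs_pow, abs_pow, abs_abs]



lemma betaValue {u v : ℝ} (hu : 0 < u) (hv : 0 < v) :
    ∫ t in Ioo (0:ℝ) 1, t ^ (u - 1) * (1 - t) ^ (v - 1)
      = Real.Gamma u * Real.Gamma v / Real.Gamma (u + v) := by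
  have h := Complex.Gamma_mul_Gamma_eq_betaIntegral (s := (u:ℂ)) (t := (v:ℂ))
    (by simpa using hu) (by simpa using hv)
  have hbeta : Complex.betaIntegral (u:ℂ) (v:ℂ)
      = ((∫ t in Ioo (0:ℝ) 1, t ^ (u - 1) * (1 - t) ^ (v - 1) : ℝ) : ℂ) := by
    rw [Complex.betaIntegral, intervalIntegral.integral_of_le zero_le_one,
      integral_Ioc_eq_integral_Ioo]
    have hof : ∫ t in Ioo (0:ℝ) 1, ((t ^ (u - 1) * (1 - t) ^ (v - 1) : ℝ) : ℂ)
        = ((∫ t in Ioo (0:ℝ) 1, t ^ (u - 1) * (1 - t) ^ (v - 1) : ℝ) : ℂ) := integral_ofReal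
    rw [← hof]
    refine setIntegral_congr_fun measurableSet_Ioo (fun x hx => ?_)
    have hx0 : (0:ℝ) < x := hx.1
    have hx1 : (0:ℝ) < 1 - x := by linarith [hx.2]
    have e1 : ((u:ℂ) - 1) = (((u - 1 : ℝ)):ℂ) := by push_cast; ring
    have e2 : ((v:ℂ) - 1) = (((v - 1 : ℝ)):ℂ) := by push_cast; ring
    have e3 : (1 - (x:ℂ)) = (((1 - x : ℝ)):ℂ) := by push_cast; ring
    rw [e1, e2, e3, ← Complex.ofReal_cpow hx0.le, ← Complex.ofReal_cpow hx1.le,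
      ← Complex.ofReal_mul]
  rw [hbeta, Complex.Gamma_ofReal, Complex.Gamma_ofReal, ← Complex.ofReal_mul] at h
  have hsum : ((u:ℂ) + (v:ℂ)) = ((u + v : ℝ) : ℂ) := by push_cast; ring
  rw [hsum, Complex.Gamma_ofReal, ← Complex.ofReal_mul] at h
  have h' : Real.Gamma u * Real.Gamma v
      = Real.Gamma (u + v) * ∫ t in Ioo (0:ℝ) 1, t ^ (u - 1) * (1 - t) ^ (v - 1) :=
    Complex.ofReal_inj.mp h
  have hne : Real.Gamma (u + v) ≠ 0 := (Real.Gamma_pos_of_pos (by linarith)).ne'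
  field_simp [h']
  rw [h']; ring



noncomputable def J (θ : ℝ) (k : ℕ) (m : ℝ) : ℝ :=
  ∫ t in Ioo (0:ℝ) 1, t ^ (m + θ - 1) * Real.log t ^ k * (1 - t) ^ (-θ)

lemma J_hasDerivAt {θ : ℝ} (hθ : 0 < θ) (hθ1 : θ < 1) (k : ℕ) {m : ℝ} (hm : 1/2 < m) :
    HasDerivAt (J θ k) (J θ (k+1) m) m := by
  have hb : (-1:ℝ) < -θ := by linarith
  have ham : (-1:ℝ) < m + θ - 1 := by linarith
  have ham' : (-1:ℝ) < m - 4⁻¹ + θ - 1 := by linarith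
  have key := hasDerivAt_integral_of_dominated_loc_of_deriv_le
    (F := fun x t => t ^ (x + θ - 1) * Real.log t ^ k * (1 - t) ^ (-θ))
    (F' := fun x t => t ^ (x + θ - 1) * Real.log t ^ (k+1) * (1 - t) ^ (-θ))
    (μ := volume.restrict (Ioo (0:ℝ) 1)) (x₀ := m)
    (bound := fun t => t ^ (m - 4⁻¹ + θ - 1) * |Real.log t| ^ (k+1) * (1 - t) ^ (-θ))
    (s := Metric.ball m 4⁻¹) (Metric.ball_mem_nhds m (by norm_num))
    (Eventually.of_forall fun x =>
      (contOn_kernel (x + θ - 1) (-θ) k).aestronglyMeasurable measurableSet_Ioo)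
    (kernel_integrable ham hb k)
    ((contOn_kernel (m + θ - 1) (-θ) (k+1)).aestronglyMeasurable measurableSet_Ioo)
    ?_ (kernel_integrable_abs ham' hb (k+1)) ?_
  · exact key.2
  · rw [ae_restrict_iff' measurableSet_Ioo]
    filter_upwards with t ht x hx
    have ht0 := ht.1
    have ht1 : (0:ℝ) < 1 - t := by linarith [ht.2]
    have hxm : m - 4⁻¹ + θ - 1 ≤ x + θ - 1 := by
      rw [Metric.mem_ball, Real.dist_eq, abs_lt] at hx
      linarith [hx.1]
    have h1 : t ^ (x + θ - 1) ≤ t ^ (m - 4⁻¹ + θ - 1) :=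
      Real.rpow_le_rpow_of_exponent_ge ht0 ht.2.le hxm
    rw [Real.norm_eq_abs, abs_mul, abs_mul, abs_pow]
    rw [abs_of_nonneg (Real.rpow_nonneg ht0.le _), abs_of_nonneg (Real.rpow_nonneg ht1.le _)]
    have h2 : (0:ℝ) ≤ |Real.log t| ^ (k+1) * (1 - t) ^ (-θ) := by positivity
    calc t ^ (x + θ - 1) * |Real.log t| ^ (k+1) * (1 - t) ^ (-θ)
        = t ^ (x + θ - 1) * (|Real.log t| ^ (k+1) * (1 - t) ^ (-θ)) := by ring
      _ ≤ t ^ (m - 4⁻¹ + θ - 1) * (|Real.log t| ^ (k+1) * (1 - t) ^ (-θ)) :=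
          mul_le_mul_of_nonneg_right h1 h2
      _ = t ^ (m - 4⁻¹ + θ - 1) * |Real.log t| ^ (k+1) * (1 - t) ^ (-θ) := by ring
  · rw [ae_restrict_iff' measurableSet_Ioo]
    filter_upwards with t ht x hx
    have ht0 := ht.1
    have hrw : ∀ y : ℝ, t ^ (y + θ - 1) = Real.exp (Real.log t * (y + θ - 1)) := fun y =>
      Real.rpow_def_of_pos ht0 _
    have hbase : HasDerivAt (fun y : ℝ => Real.log t * y + Real.log t * (θ - 1)) (Real.log t) x := by
      simpa using ((hasDerivAt_id x).const_mul (Real.log t)).add_const (Real.log t * (θ - 1))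
    have H := ((hbase.exp).mul_const (Real.log t ^ k * (1 - t) ^ (-θ)))
    have hfun : (fun y : ℝ => Real.exp (Real.log t * y + Real.log t * (θ - 1)) * (Real.log t ^ k * (1 - t) ^ (-θ)))
        = fun y : ℝ => t ^ (y + θ - 1) * Real.log t ^ k * (1 - t) ^ (-θ) := by
      funext y
      rw [hrw y, show Real.log t * (y + θ - 1) = Real.log t * y + Real.log t * (θ - 1) from by ring]
      ring
    rw [hfun] at H
    refine H.congr_deriv ?_
    rw [hrw x, show Real.log t * (x + θ - 1) = Real.log t * x + Real.log t * (θ - 1) from by ring]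
    ring



lemma Gamma_ratio_le {s x : ℝ} (hs : 1 ≤ s) (hx : 1 ≤ x) :
    Real.Gamma x * x ^ s ≤ Real.Gamma (x + s) := by
  have hx0 : (0:ℝ) < x := by linarith
  have hΓx : 0 < Real.Gamma x := Real.Gamma_pos_of_pos hx0
  rcases eq_or_lt_of_le hs with h1 | h1
  · rw [← h1, Real.rpow_one, Real.Gamma_add_one hx0.ne']
    exact le_of_eq (mul_comm _ _)
  · have hs0 : (0:ℝ) < s := by linarith
    have ha0 : 0 < 1 - 1/s := by
      have : 1/s < 1 := by rw [div_lt_one hs0]; exact h1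
      linarith
    have hb0 : 0 < 1/s := by positivity
    have key := Real.Gamma_mul_add_mul_le_rpow_Gamma_mul_rpow_Gamma
      (s := x) (t := x + s) (a := 1 - 1/s) (b := 1/s) hx0 (by linarith) ha0 hb0 (by ring)
    have harg : (1 - 1/s) * x + (1/s) * (x + s) = x + 1 := by
      field_simp; ring
    rw [harg, Real.Gamma_add_one hx0.ne'] at key
    -- key : x * Γ x ≤ Γ x ^ a * Γ (x+s) ^ b
    have hΓxs : 0 < Real.Gamma (x + s) := Real.Gamma_pos_of_pos (by linarith)
    have key2 : (x * Real.Gamma x) ^ s ≤ (Real.Gamma x ^ (1 - 1/s) * Real.Gamma (x + s) ^ (1/s)) ^ s :=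
      Real.rpow_le_rpow (by positivity) key hs0.le
    rw [Real.mul_rpow hx0.le hΓx.le, Real.mul_rpow (by positivity) (by positivity),
      ← Real.rpow_mul hΓx.le, ← Real.rpow_mul hΓxs.le] at key2
    have has : (1 - 1/s) * s = s - 1 := by field_simp
    have hbs : (1/s) * s = 1 := by field_simp
    rw [has, hbs, Real.rpow_one] at key2
    -- key2 : x ^ s * Γ x ^ s ≤ Γ x ^ (s-1) * Γ (x+s)
    have hsplit : Real.Gamma x ^ s = Real.Gamma x ^ (s-1) * Real.Gamma x := by
      rw [← Real.rpow_add_one hΓx.ne' (s-1)]; ring_nf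
    rw [hsplit] at key2
    have hP : (0:ℝ) < Real.Gamma x ^ (s-1) := Real.rpow_pos_of_pos hΓx _
    have key3 : Real.Gamma x ^ (s-1) * (Real.Gamma x * x ^ s)
        ≤ Real.Gamma x ^ (s-1) * Real.Gamma (x + s) := by
      calc Real.Gamma x ^ (s-1) * (Real.Gamma x * x ^ s)
          = x ^ s * (Real.Gamma x ^ (s-1) * Real.Gamma x) := by ring
        _ ≤ Real.Gamma x ^ (s-1) * Real.Gamma (x + s) := key2
    exact le_of_mul_le_mul_left key3 hP

lemma Gamma_ratio_lb {r x : ℝ} (hr : 0 < r) (hx : 1 ≤ x) :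
    Real.Gamma x * x ^ r ≤ 2 * Real.Gamma (x + r) := by
  have hx0 : (0:ℝ) < x := by linarith
  have hΓxr : 0 < Real.Gamma (x + r) := Real.Gamma_pos_of_pos (by linarith)
  rcases le_or_gt 1 r with h1 | h1
  · calc Real.Gamma x * x ^ r ≤ Real.Gamma (x + r) := Gamma_ratio_le h1 hx
      _ ≤ 2 * Real.Gamma (x + r) := by linarith
  · have hΓx : 0 < Real.Gamma x := Real.Gamma_pos_of_pos hx0
    have key := Real.Gamma_mul_add_mul_le_rpow_Gamma_mul_rpow_Gamma
      (s := x + r) (t := x + r + 1) (a := r) (b := 1 - r) (by linarith) (by linarith) hr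
      (by linarith) (by ring)
    have harg : r * (x + r) + (1 - r) * (x + r + 1) = x + 1 := by ring
    rw [harg, Real.Gamma_add_one hx0.ne',
      Real.Gamma_add_one (by positivity : x + r ≠ 0)] at key
    -- key : x * Γ x ≤ Γ(x+r)^r * ((x+r) * Γ(x+r))^(1-r)
    have h2 : Real.Gamma (x+r) ^ r * ((x + r) * Real.Gamma (x+r)) ^ (1-r)
        = Real.Gamma (x+r) * (x + r) ^ (1-r) := by
      rw [Real.mul_rpow (by positivity) hΓxr.le, ← mul_assoc,
        mul_comm (Real.Gamma (x+r) ^ r), mul_assoc, ← Real.rpow_add hΓxr]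
      ring_nf
      rw [Real.rpow_one]
    rw [h2] at key
    have h3 : (x + r) ^ (1-r) ≤ 2 * x ^ (1-r) := by
      have hxr2 : x + r ≤ 2 * x := by linarith
      calc (x + r) ^ (1-r) ≤ (2*x) ^ (1-r) :=
            Real.rpow_le_rpow (by positivity) hxr2 (by linarith)
        _ = 2 ^ (1-r) * x ^ (1-r) := Real.mul_rpow (by norm_num) hx0.le
        _ ≤ 2 * x ^ (1-r) := by
            have : (2:ℝ) ^ (1-r) ≤ 2 ^ (1:ℝ) :=
              Real.rpow_le_rpow_of_exponent_le one_le_two (by linarith)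
            rw [Real.rpow_one] at this
            exact mul_le_mul_of_nonneg_right this (Real.rpow_nonneg hx0.le _)
    have key2 : x * Real.Gamma x ≤ Real.Gamma (x+r) * (2 * x ^ (1-r)) :=
      key.trans (mul_le_mul_of_nonneg_left h3 hΓxr.le)
    -- conclude : Γ x * x ^ r ≤ 2 Γ(x+r)
    have hxpow : x ^ r * x ^ (1-r) = x := by
      rw [← Real.rpow_add hx0]; ring_nf; exact Real.rpow_one x
    have key3 : x ^ (1-r) * (Real.Gamma x * x ^ r) ≤ x ^ (1-r) * (2 * Real.Gamma (x+r)) := by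
      calc x ^ (1-r) * (Real.Gamma x * x ^ r) = (x ^ r * x ^ (1-r)) * Real.Gamma x := by ring
        _ = x * Real.Gamma x := by rw [hxpow]
        _ ≤ Real.Gamma (x+r) * (2 * x ^ (1-r)) := key2
        _ = x ^ (1-r) * (2 * Real.Gamma (x+r)) := by ring
    exact le_of_mul_le_mul_left key3 (Real.rpow_pos_of_pos hx0 _)




lemma J_bound {θ : ℝ} (hθ : 0 < θ) (hθ1 : θ < 1) (k : ℕ) :
    ∃ C, 0 < C ∧ ∀ m, 1 ≤ m → |J θ k m| ≤ C * m ^ (θ - 1 - (k:ℝ)) := by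
  have hb : (-1:ℝ) < -θ := by linarith
  set C₁ : ℝ := 2 ^ θ * (k.factorial * 2 ^ k) * 2 with hC₁
  set C₂ : ℝ := 2 ^ k * (2 * Real.Gamma ((k:ℝ) + 1 - θ)) with hC₂
  have hr0 : (0:ℝ) < (k:ℝ) + 1 - θ := by
    have : (0:ℝ) ≤ (k:ℝ) := Nat.cast_nonneg k
    linarith
  have hC₁0 : 0 < C₁ := by positivity
  have hC₂0 : 0 < C₂ := by
    have := Real.Gamma_pos_of_pos hr0
    positivity
  refine ⟨C₁ + C₂, by positivity, fun m hm => ?_⟩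
  have hm0 : (0:ℝ) < m := by linarith
  have ham : (-1:ℝ) < m + θ - 1 := by linarith
  -- step 1 : |J| ≤ I
  have hIint : IntegrableOn (fun t : ℝ => t ^ (m + θ - 1) * |Real.log t| ^ k * (1 - t) ^ (-θ))
      (Ioo (0:ℝ) 1) := kernel_integrable_abs ham hb k
  have step1 : |J θ k m| ≤ ∫ t in Ioo (0:ℝ) 1, t ^ (m + θ - 1) * |Real.log t| ^ k * (1 - t) ^ (-θ) := by
    rw [J, ← Real.norm_eq_abs]
    refine (norm_integral_le_integral_norm _).trans (le_of_eq ?_)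
    refine setIntegral_congr_fun measurableSet_Ioo (fun t ht => ?_)
    have ht1 : (0:ℝ) < 1 - t := by linarith [ht.2]
    rw [Real.norm_eq_abs, abs_mul, abs_mul, abs_pow, abs_of_nonneg (Real.rpow_nonneg ht.1.le _),
      abs_of_nonneg (Real.rpow_nonneg ht1.le _)]
  -- split the integral
  have hsplit : Ioo (0:ℝ) 1 = Ioo 0 2⁻¹ ∪ Ico 2⁻¹ 1 := by
    ext t
    constructor
    · rintro ⟨h0, h1⟩
      rcases lt_or_ge t 2⁻¹ with h | h
      · exact Or.inl ⟨h0, h⟩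
      · exact Or.inr ⟨h, h1⟩
    · rintro (⟨h0, h⟩ | ⟨h, h1⟩)
      · exact ⟨h0, h.trans (by norm_num)⟩
      · exact ⟨lt_of_lt_of_le (by norm_num) h, h1⟩
  have hdisj : Disjoint (Ioo (0:ℝ) 2⁻¹) (Ico 2⁻¹ 1) := by
    refine Set.disjoint_left.mpr (fun t ht ht' => ?_)
    exact absurd ht'.1 (not_le.mpr ht.2)
  have hint1 : IntegrableOn (fun t : ℝ => t ^ (m + θ - 1) * |Real.log t| ^ k * (1 - t) ^ (-θ))
      (Ioo (0:ℝ) 2⁻¹) := hIint.mono_set (by rw [hsplit]; exact subset_union_left)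
  have hint2 : IntegrableOn (fun t : ℝ => t ^ (m + θ - 1) * |Real.log t| ^ k * (1 - t) ^ (-θ))
      (Ico (2⁻¹:ℝ) 1) := hIint.mono_set (by rw [hsplit]; exact subset_union_right)
  have step2 : ∫ t in Ioo (0:ℝ) 1, t ^ (m + θ - 1) * |Real.log t| ^ k * (1 - t) ^ (-θ)
      = (∫ t in Ioo (0:ℝ) 2⁻¹, t ^ (m + θ - 1) * |Real.log t| ^ k * (1 - t) ^ (-θ))
        + ∫ t in Ico (2⁻¹:ℝ) 1, t ^ (m + θ - 1) * |Real.log t| ^ k * (1 - t) ^ (-θ) := by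
    rw [hsplit]
    exact setIntegral_union hdisj measurableSet_Ico hint1 hint2
  -- first piece
  have hg_int : IntegrableOn (fun t : ℝ => t ^ (m/2 - 1)) (Ioo (0:ℝ) 1) := by
    have h := intervalIntegral.intervalIntegrable_rpow' (r := m/2 - 1) (by linarith) (a := 0) (b := 1)
    rw [intervalIntegrable_iff_integrableOn_Ioc_of_le zero_le_one] at h
    exact h.mono_set Ioo_subset_Ioc_self
  have hsub1 : Ioo (0:ℝ) 2⁻¹ ⊆ Ioo (0:ℝ) 1 := Ioo_subset_Ioo_right (by norm_num)
  have hg_int' : IntegrableOn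
      (fun t : ℝ => (2 ^ θ * ((k.factorial : ℝ) / (m/2) ^ k)) * t ^ (m/2 - 1)) (Ioo (0:ℝ) 2⁻¹) :=
    (hg_int.mono_set hsub1).const_mul _
  have hptw1 : ∀ t ∈ Ioo (0:ℝ) 2⁻¹, t ^ (m + θ - 1) * |Real.log t| ^ k * (1 - t) ^ (-θ)
      ≤ (2 ^ θ * ((k.factorial : ℝ) / (m/2) ^ k)) * t ^ (m/2 - 1) := by
    intro t ht
    have ht0 : (0:ℝ) < t := ht.1
    have ht1 : t ≤ 1 := by have := ht.2; norm_num at this ⊢; linarith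
    have h1t : (2⁻¹:ℝ) ≤ 1 - t := by have := ht.2; linarith
    have hA : (1 - t) ^ (-θ) ≤ 2 ^ θ := by
      have h := Real.rpow_le_rpow_of_nonpos (by norm_num : (0:ℝ) < 2⁻¹) h1t
        (by linarith : -θ ≤ 0)
      calc (1 - t) ^ (-θ) ≤ ((2:ℝ)⁻¹) ^ (-θ) := h
        _ = 2 ^ θ := by
            rw [Real.inv_rpow (by norm_num), Real.rpow_neg (by norm_num), inv_inv]
    have hB : t ^ (m + θ - 1) ≤ t ^ (m - 1) :=
      Real.rpow_le_rpow_of_exponent_ge ht0 ht1 (by linarith)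
    have hC : t ^ (m - 1) = t ^ (m/2) * t ^ (m/2 - 1) := by
      rw [← Real.rpow_add ht0]; congr 1; ring
    have hD : t ^ (m/2) * |Real.log t| ^ k ≤ (k.factorial : ℝ) / (m/2) ^ k := by
      have hε : (0:ℝ) < m/2 := by linarith
      have hl := log_pow_le (k := k) hε ht0 ht1
      calc t ^ (m/2) * |Real.log t| ^ k
          ≤ t ^ (m/2) * (((k.factorial : ℝ) / (m/2) ^ k) * t ^ (-(m/2))) :=
            mul_le_mul_of_nonneg_left hl (Real.rpow_nonneg ht0.le _)
        _ = ((k.factorial : ℝ) / (m/2) ^ k) * (t ^ (m/2) * t ^ (-(m/2))) := by ring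
        _ = (k.factorial : ℝ) / (m/2) ^ k := by
            rw [← Real.rpow_add ht0]
            simp
    have hnn : (0:ℝ) ≤ t ^ (m - 1) * |Real.log t| ^ k := by positivity
    calc t ^ (m + θ - 1) * |Real.log t| ^ k * (1 - t) ^ (-θ)
        ≤ t ^ (m - 1) * |Real.log t| ^ k * (1 - t) ^ (-θ) := by
          refine mul_le_mul_of_nonneg_right (mul_le_mul_of_nonneg_right hB (by positivity)) ?_
          exact Real.rpow_nonneg (by linarith) _
      _ ≤ t ^ (m - 1) * |Real.log t| ^ k * 2 ^ θ := mul_le_mul_of_nonneg_left hA hnn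
      _ = 2 ^ θ * (t ^ (m/2) * |Real.log t| ^ k) * t ^ (m/2 - 1) := by rw [hC]; ring
      _ ≤ 2 ^ θ * ((k.factorial : ℝ) / (m/2) ^ k) * t ^ (m/2 - 1) := by
          refine mul_le_mul_of_nonneg_right ?_ (Real.rpow_nonneg ht0.le _)
          exact mul_le_mul_of_nonneg_left hD (by positivity)
      _ = (2 ^ θ * ((k.factorial : ℝ) / (m/2) ^ k)) * t ^ (m/2 - 1) := by ring
  have hval : ∫ t in Ioo (0:ℝ) 1, t ^ (m/2 - 1) = 1 / (m/2) := by
    rw [← integral_Ioc_eq_integral_Ioo, ← intervalIntegral.integral_of_le zero_le_one,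
      integral_rpow (Or.inl (by linarith))]
    rw [Real.one_rpow, Real.zero_rpow (by intro h; linarith [h] : m/2 - 1 + 1 ≠ 0),
      show m/2 - 1 + 1 = m/2 by ring]
    norm_num
  have hI1 : (∫ t in Ioo (0:ℝ) 2⁻¹, t ^ (m + θ - 1) * |Real.log t| ^ k * (1 - t) ^ (-θ))
      ≤ C₁ * m ^ (θ - 1 - (k:ℝ)) := by
    have step := setIntegral_mono_on hint1 hg_int' measurableSet_Ioo hptw1
    have hmon : (∫ t in Ioo (0:ℝ) 2⁻¹, t ^ (m/2 - 1)) ≤ ∫ t in Ioo (0:ℝ) 1, t ^ (m/2 - 1) := by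
      refine setIntegral_mono_set hg_int ?_ (HasSubset.Subset.eventuallyLE hsub1)
      filter_upwards [ae_restrict_mem measurableSet_Ioo] with t ht
      exact Real.rpow_nonneg ht.1.le _
    have hconst : (0:ℝ) ≤ 2 ^ θ * ((k.factorial : ℝ) / (m/2) ^ k) := by positivity
    calc (∫ t in Ioo (0:ℝ) 2⁻¹, t ^ (m + θ - 1) * |Real.log t| ^ k * (1 - t) ^ (-θ))
        ≤ ∫ t in Ioo (0:ℝ) 2⁻¹, (2 ^ θ * ((k.factorial : ℝ) / (m/2) ^ k)) * t ^ (m/2 - 1) := step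
      _ = (2 ^ θ * ((k.factorial : ℝ) / (m/2) ^ k)) * ∫ t in Ioo (0:ℝ) 2⁻¹, t ^ (m/2 - 1) :=
          integral_const_mul _ _
      _ ≤ (2 ^ θ * ((k.factorial : ℝ) / (m/2) ^ k)) * (1 / (m/2)) := by
          refine mul_le_mul_of_nonneg_left ?_ hconst
          rw [← hval]; exact hmon
      _ = C₁ / (m ^ k * m) := by
          rw [hC₁]; field_simp
          rw [← mul_pow, div_mul_cancel₀ m two_ne_zero]
      _ ≤ C₁ * m ^ (θ - 1 - (k:ℝ)) := by
          rw [div_eq_mul_inv]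
          refine mul_le_mul_of_nonneg_left ?_ hC₁0.le
          have h1 : (m:ℝ) ^ k * m = m ^ ((k:ℝ) + 1) := by
            rw [Real.rpow_add hm0, Real.rpow_one, Real.rpow_natCast]
          rw [h1, ← Real.rpow_neg hm0.le]
          exact Real.rpow_le_rpow_of_exponent_le hm (by linarith)
  -- second piece
  have hr1 : (-1:ℝ) < (k:ℝ) - θ := by
    have : (0:ℝ) ≤ (k:ℝ) := Nat.cast_nonneg k
    linarith
  have hbint : IntegrableOn (fun t : ℝ => t ^ (m - 1) * (1 - t) ^ ((k:ℝ) - θ)) (Ioo (0:ℝ) 1) :=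
    betaIntegrable (by linarith) hr1
  have hsub2 : Ico (2⁻¹:ℝ) 1 ⊆ Ioo (0:ℝ) 1 := fun t ht =>
    ⟨lt_of_lt_of_le (by norm_num) ht.1, ht.2⟩
  have hint2' : IntegrableOn (fun t : ℝ => (2:ℝ) ^ k * (t ^ (m - 1) * (1 - t) ^ ((k:ℝ) - θ)))
      (Ico (2⁻¹:ℝ) 1) := (hbint.mono_set hsub2).const_mul _
  have hptw2 : ∀ t ∈ Ico (2⁻¹:ℝ) 1, t ^ (m + θ - 1) * |Real.log t| ^ k * (1 - t) ^ (-θ)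
      ≤ (2:ℝ) ^ k * (t ^ (m - 1) * (1 - t) ^ ((k:ℝ) - θ)) := by
    intro t ht
    have ht0 : (0:ℝ) < t := lt_of_lt_of_le (by norm_num) ht.1
    have ht1 : t < 1 := ht.2
    have h1t : (0:ℝ) < 1 - t := by linarith
    have hlog : |Real.log t| ≤ 2 * (1 - t) := by
      have h' := Real.log_le_sub_one_of_pos (inv_pos.mpr ht0)
      rw [Real.log_inv] at h'
      have habs : |Real.log t| = -Real.log t := abs_of_nonpos (Real.log_nonpos ht0.le ht1.le)
      have hinv : t⁻¹ ≤ 2 := by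
        rw [← inv_inv (2:ℝ)]
        exact inv_anti₀ (by norm_num) ht.1
      have : t⁻¹ - 1 = (1 - t) * t⁻¹ := by field_simp
      rw [habs]
      calc -Real.log t ≤ t⁻¹ - 1 := h'
        _ = (1 - t) * t⁻¹ := this
        _ ≤ (1 - t) * 2 := mul_le_mul_of_nonneg_left hinv h1t.le
        _ = 2 * (1 - t) := by ring
    have hlogk : |Real.log t| ^ k ≤ 2 ^ k * (1 - t) ^ k := by
      calc |Real.log t| ^ k ≤ (2 * (1 - t)) ^ k := pow_le_pow_left₀ (abs_nonneg _) hlog k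
        _ = 2 ^ k * (1 - t) ^ k := mul_pow _ _ _
    have hmono : t ^ (m + θ - 1) ≤ t ^ (m - 1) :=
      Real.rpow_le_rpow_of_exponent_ge ht0 ht1.le (by linarith)
    have hmix : ((1 - t):ℝ) ^ k * (1 - t) ^ (-θ) = (1 - t) ^ ((k:ℝ) - θ) := by
      rw [← Real.rpow_natCast (1 - t) k, ← Real.rpow_add h1t]
      congr 1
    calc t ^ (m + θ - 1) * |Real.log t| ^ k * (1 - t) ^ (-θ)
        ≤ t ^ (m - 1) * |Real.log t| ^ k * (1 - t) ^ (-θ) := by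
          refine mul_le_mul_of_nonneg_right (mul_le_mul_of_nonneg_right hmono (by positivity)) ?_
          exact Real.rpow_nonneg h1t.le _
      _ ≤ t ^ (m - 1) * (2 ^ k * (1 - t) ^ k) * (1 - t) ^ (-θ) := by
          refine mul_le_mul_of_nonneg_right (mul_le_mul_of_nonneg_left hlogk ?_) ?_
          · exact Real.rpow_nonneg ht0.le _
          · exact Real.rpow_nonneg h1t.le _
      _ = (2:ℝ) ^ k * (t ^ (m - 1) * (((1 - t):ℝ) ^ k * (1 - t) ^ (-θ))) := by ring
      _ = (2:ℝ) ^ k * (t ^ (m - 1) * (1 - t) ^ ((k:ℝ) - θ)) := by rw [hmix]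
  have hbval : ∫ t in Ioo (0:ℝ) 1, t ^ (m - 1) * (1 - t) ^ ((k:ℝ) - θ)
      = Real.Gamma m * Real.Gamma ((k:ℝ) + 1 - θ) / Real.Gamma (m + ((k:ℝ) + 1 - θ)) := by
    have h := betaValue (u := m) (v := (k:ℝ) + 1 - θ) hm0 hr0
    rw [show ((k:ℝ) + 1 - θ - 1) = (k:ℝ) - θ by ring] at h
    exact h
  have hΓm : 0 < Real.Gamma m := Real.Gamma_pos_of_pos hm0
  have hΓr : 0 < Real.Gamma ((k:ℝ) + 1 - θ) := Real.Gamma_pos_of_pos hr0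
  have hΓmr : 0 < Real.Gamma (m + ((k:ℝ) + 1 - θ)) := Real.Gamma_pos_of_pos (by linarith)
  have hgamma : Real.Gamma m * Real.Gamma ((k:ℝ) + 1 - θ) / Real.Gamma (m + ((k:ℝ) + 1 - θ))
      ≤ Real.Gamma ((k:ℝ) + 1 - θ) * (2 * m ^ (θ - 1 - (k:ℝ))) := by
    have hlb := Gamma_ratio_lb (r := (k:ℝ) + 1 - θ) hr0 hm
    have hmr : (0:ℝ) < m ^ ((k:ℝ) + 1 - θ) := Real.rpow_pos_of_pos hm0 _
    have hneg : m ^ (θ - 1 - (k:ℝ)) = (m ^ ((k:ℝ) + 1 - θ))⁻¹ := by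
      rw [← Real.rpow_neg hm0.le]
      congr 1; ring
    rw [div_le_iff₀ hΓmr, hneg]
    have expand : Real.Gamma ((k:ℝ) + 1 - θ) * (2 * (m ^ ((k:ℝ) + 1 - θ))⁻¹)
        * Real.Gamma (m + ((k:ℝ) + 1 - θ))
        = (Real.Gamma ((k:ℝ) + 1 - θ) * (m ^ ((k:ℝ) + 1 - θ))⁻¹)
          * (2 * Real.Gamma (m + ((k:ℝ) + 1 - θ))) := by ring
    rw [expand]
    calc Real.Gamma m * Real.Gamma ((k:ℝ) + 1 - θ)
        = (Real.Gamma ((k:ℝ) + 1 - θ) * (m ^ ((k:ℝ) + 1 - θ))⁻¹)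
          * (Real.Gamma m * m ^ ((k:ℝ) + 1 - θ)) := by
          field_simp
      _ ≤ (Real.Gamma ((k:ℝ) + 1 - θ) * (m ^ ((k:ℝ) + 1 - θ))⁻¹)
          * (2 * Real.Gamma (m + ((k:ℝ) + 1 - θ))) := by
          refine mul_le_mul_of_nonneg_left hlb ?_
          positivity
  have hI2 : (∫ t in Ico (2⁻¹:ℝ) 1, t ^ (m + θ - 1) * |Real.log t| ^ k * (1 - t) ^ (-θ))
      ≤ C₂ * m ^ (θ - 1 - (k:ℝ)) := by
    have step := setIntegral_mono_on hint2 hint2' measurableSet_Ico hptw2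
    have hmon : (∫ t in Ico (2⁻¹:ℝ) 1, t ^ (m - 1) * (1 - t) ^ ((k:ℝ) - θ))
        ≤ ∫ t in Ioo (0:ℝ) 1, t ^ (m - 1) * (1 - t) ^ ((k:ℝ) - θ) := by
      refine setIntegral_mono_set hbint ?_ (HasSubset.Subset.eventuallyLE hsub2)
      filter_upwards [ae_restrict_mem measurableSet_Ioo] with t ht
      have ht0 : (0:ℝ) < t := ht.1
      have h1t : (0:ℝ) < 1 - t := by linarith [ht.2]
      positivity
    calc (∫ t in Ico (2⁻¹:ℝ) 1, t ^ (m + θ - 1) * |Real.log t| ^ k * (1 - t) ^ (-θ))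
        ≤ ∫ t in Ico (2⁻¹:ℝ) 1, (2:ℝ) ^ k * (t ^ (m - 1) * (1 - t) ^ ((k:ℝ) - θ)) := step
      _ = (2:ℝ) ^ k * ∫ t in Ico (2⁻¹:ℝ) 1, t ^ (m - 1) * (1 - t) ^ ((k:ℝ) - θ) :=
          integral_const_mul _ _
      _ ≤ (2:ℝ) ^ k * ∫ t in Ioo (0:ℝ) 1, t ^ (m - 1) * (1 - t) ^ ((k:ℝ) - θ) := by
          refine mul_le_mul_of_nonneg_left hmon (by positivity)
      _ = (2:ℝ) ^ k * (Real.Gamma m * Real.Gamma ((k:ℝ) + 1 - θ)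
            / Real.Gamma (m + ((k:ℝ) + 1 - θ))) := by rw [hbval]
      _ ≤ (2:ℝ) ^ k * (Real.Gamma ((k:ℝ) + 1 - θ) * (2 * m ^ (θ - 1 - (k:ℝ)))) := by
          refine mul_le_mul_of_nonneg_left hgamma (by positivity)
      _ = C₂ * m ^ (θ - 1 - (k:ℝ)) := by rw [hC₂]; ring
  calc |J θ k m| ≤ ∫ t in Ioo (0:ℝ) 1, t ^ (m + θ - 1) * |Real.log t| ^ k * (1 - t) ^ (-θ) := step1
    _ = _ + _ := step2
    _ ≤ C₁ * m ^ (θ - 1 - (k:ℝ)) + C₂ * m ^ (θ - 1 - (k:ℝ)) := add_le_add hI1 hI2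
    _ = (C₁ + C₂) * m ^ (θ - 1 - (k:ℝ)) := by ring




lemma J_zero {θ : ℝ} (hθ : 0 < θ) (hθ1 : θ < 1) {m : ℝ} (hm : 0 < m) :
    J θ 0 m = Real.Gamma (m + θ) * Real.Gamma (1 - θ) / Real.Gamma (m + 1) := by
  have h := betaValue (u := m + θ) (v := 1 - θ) (by linarith) (by linarith)
  rw [show (m + θ - 1 : ℝ) = m + θ - 1 from rfl, show ((1:ℝ) - θ - 1) = -θ by ring,
    show (m + θ + (1 - θ) : ℝ) = m + 1 by ring] at h
  rw [J]
  rw [← h]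
  refine setIntegral_congr_fun measurableSet_Ioo (fun t ht => ?_)
  simp

/-- A family of functions which are successive derivatives of each other on `(1/2, ∞)`
and satisfy symbol bounds with exponent `e`. -/
def Good (e : ℝ) (D : ℕ → ℝ → ℝ) : Prop :=
  (∀ k, ∀ m : ℝ, 1/2 < m → HasDerivAt (D k) (D (k+1) m) m) ∧
  (∀ k, ∃ C, 0 < C ∧ ∀ m : ℝ, 1 ≤ m → |D k m| ≤ C * m ^ (e - (k:ℝ)))

noncomputable def shiftD (c : ℝ) (D : ℕ → ℝ → ℝ) : ℕ → ℝ → ℝ :=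
  fun k m => (m + c) * D k m + (k:ℝ) * D (k-1) m

lemma good_shift {e : ℝ} {D : ℕ → ℝ → ℝ} (h : Good e D) {c : ℝ} (hc : 0 ≤ c) :
    Good (e+1) (shiftD c D) := by
  obtain ⟨hD, hB⟩ := h
  constructor
  · intro k m hm
    have h1 : HasDerivAt (fun x : ℝ => (x + c) * D k x)
        (1 * D k m + (m + c) * D (k+1) m) m :=
      ((hasDerivAt_id m).add_const c).mul (hD k m hm)
    rcases Nat.eq_zero_or_pos k with hk | hk
    · subst hk
      have h2 : HasDerivAt (fun x : ℝ => (0:ℝ) * D 0 x) 0 m := by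
        simpa using (hasDerivAt_const m (0:ℝ))
      have h3 : HasDerivAt (fun x : ℝ => (x + c) * D 0 x + (0:ℝ) * D 0 x) _ m := h1.add h2
      have hfun : (fun x : ℝ => (x + c) * D 0 x + (0:ℝ) * D 0 x)
          = fun x : ℝ => (x + c) * D 0 x + ((0:ℕ):ℝ) * D (0-1) x := by
        norm_num
      rw [hfun] at h3
      convert h3 using 1
      show (m + c) * D 1 m + ((1:ℕ):ℝ) * D 0 m = _
      push_cast
      ring
      rfl
    · have h2 : HasDerivAt (fun x : ℝ => (k:ℝ) * D (k-1) x) ((k:ℝ) * D k m) m := by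
        have := (hD (k-1) m hm).const_mul (k:ℝ)
        rwa [Nat.sub_add_cancel hk] at this
      have h3 : HasDerivAt (fun x : ℝ => (x + c) * D k x + (k:ℝ) * D (k-1) x) _ m := h1.add h2
      convert h3 using 1
      show (m + c) * D (k+1) m + ((k+1:ℕ):ℝ) * D (k+1-1) m = _
      rw [Nat.add_sub_cancel]
      push_cast
      ring
      rfl
  · intro k
    obtain ⟨C1, hC1, hb1⟩ := hB k
    obtain ⟨C2, hC2, hb2⟩ := hB (k-1)
    refine ⟨(1 + c) * C1 + (k:ℝ) * C2 + 1, by positivity, fun m hm => ?_⟩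
    have hm0 : (0:ℝ) < m := by linarith
    have hmc : |m + c| ≤ (1 + c) * m := by
      rw [abs_of_nonneg (by linarith)]
      nlinarith
    have hpow : m ^ (e - (k:ℝ)) * m = m ^ (e + 1 - (k:ℝ)) := by
      rw [← Real.rpow_add_one hm0.ne' (e - (k:ℝ))]
      congr 1; ring
    have hb1' := hb1 m hm
    have hnn : (0:ℝ) < m ^ (e + 1 - (k:ℝ)) := Real.rpow_pos_of_pos hm0 _
    have hterm1 : |(m + c) * D k m| ≤ (1 + c) * C1 * m ^ (e + 1 - (k:ℝ)) := by
      rw [abs_mul]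
      calc |m + c| * |D k m| ≤ ((1 + c) * m) * (C1 * m ^ (e - (k:ℝ))) := by
            refine mul_le_mul hmc hb1' (abs_nonneg _) (by positivity)
        _ = (1 + c) * C1 * (m ^ (e - (k:ℝ)) * m) := by ring
        _ = (1 + c) * C1 * m ^ (e + 1 - (k:ℝ)) := by rw [hpow]
    have hterm2 : |(k:ℝ) * D (k-1) m| ≤ (k:ℝ) * C2 * m ^ (e + 1 - (k:ℝ)) := by
      rcases Nat.eq_zero_or_pos k with hk | hk
      · subst hk; simp
      · rw [abs_mul, abs_of_nonneg (Nat.cast_nonneg k : (0:ℝ) ≤ (k:ℝ))]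
        have hb2' := hb2 m hm
        have hcast : ((k-1 : ℕ):ℝ) = (k:ℝ) - 1 := by
          rw [Nat.cast_sub hk]; norm_num
        have hexp : e - ((k-1:ℕ):ℝ) = e + 1 - (k:ℝ) := by rw [hcast]; ring
        rw [hexp] at hb2'
        calc (k:ℝ) * |D (k-1) m| ≤ (k:ℝ) * (C2 * m ^ (e + 1 - (k:ℝ))) :=
              mul_le_mul_of_nonneg_left hb2' (Nat.cast_nonneg k)
          _ = (k:ℝ) * C2 * m ^ (e + 1 - (k:ℝ)) := by ring
    calc |shiftD c D k m| ≤ |(m + c) * D k m| + |(k:ℝ) * D (k-1) m| := abs_add_le _ _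
      _ ≤ (1 + c) * C1 * m ^ (e + 1 - (k:ℝ)) + (k:ℝ) * C2 * m ^ (e + 1 - (k:ℝ)) :=
          add_le_add hterm1 hterm2
      _ ≤ ((1 + c) * C1 + (k:ℝ) * C2 + 1) * m ^ (e + 1 - (k:ℝ)) := by nlinarith
      _ = ((1 + c) * C1 + (k:ℝ) * C2 + 1) * m ^ (e + 1 - (k:ℝ)) := rfl

lemma iteratedDeriv_eq_of_family {f : ℝ → ℝ} {D : ℕ → ℝ → ℝ}
    (hD : ∀ k, ∀ m : ℝ, 1/2 < m → HasDerivAt (D k) (D (k+1) m) m)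
    (hf : ∀ m : ℝ, 1/2 < m → f m = D 0 m) :
    ∀ k, ∀ m : ℝ, 1/2 < m → iteratedDeriv k f m = D k m := by
  intro k
  induction k with
  | zero => intro m hm; simpa using hf m hm
  | succ k ih =>
    intro m hm
    rw [iteratedDeriv_succ]
    have hev : iteratedDeriv k f =ᶠ[nhds m] D k := by
      have hmem : Ioi (1/2 : ℝ) ∈ nhds m := isOpen_Ioi.mem_nhds hm
      filter_upwards [hmem] with x hx
      exact ih x hx
    rw [hev.deriv_eq]
    exact (hD k m hm).deriv




lemma good_base {θ : ℝ} (hθ : 0 < θ) (hθ1 : θ < 1) :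
    Good (θ - 1) (fun k m => (Real.Gamma (1 - θ))⁻¹ * J θ k m) := by
  constructor
  · intro k m hm
    exact (J_hasDerivAt hθ hθ1 k hm).const_mul _
  · intro k
    obtain ⟨C, hC, hb⟩ := J_bound hθ hθ1 k
    have hΓ : 0 < Real.Gamma (1 - θ) := Real.Gamma_pos_of_pos (by linarith)
    refine ⟨(Real.Gamma (1 - θ))⁻¹ * C, by positivity, fun m hm => ?_⟩
    rw [abs_mul, abs_of_nonneg (by positivity : (0:ℝ) ≤ (Real.Gamma (1 - θ))⁻¹)]
    rw [show θ - 1 - (k:ℝ) = θ - 1 - (k:ℝ) from rfl]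
    calc (Real.Gamma (1 - θ))⁻¹ * |J θ k m|
        ≤ (Real.Gamma (1 - θ))⁻¹ * (C * m ^ (θ - 1 - (k:ℝ))) :=
          mul_le_mul_of_nonneg_left (hb m hm) (by positivity)
      _ = (Real.Gamma (1 - θ))⁻¹ * C * m ^ (θ - 1 - (k:ℝ)) := by ring

lemma base_zero {θ : ℝ} (hθ : 0 < θ) (hθ1 : θ < 1) {m : ℝ} (hm : 0 < m) :
    (Real.Gamma (1 - θ))⁻¹ * J θ 0 m = Real.Gamma (m + θ) / Real.Gamma (m + 1) := by
  rw [J_zero hθ hθ1 hm]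
  have hΓ : Real.Gamma (1 - θ) ≠ 0 := (Real.Gamma_pos_of_pos (by linarith)).ne'
  field_simp

lemma good_one : Good 0 (fun k _ => if k = 0 then (1:ℝ) else 0) := by
  constructor
  · intro k m hm
    show HasDerivAt (fun _ : ℝ => if k = 0 then (1:ℝ) else 0) (if k + 1 = 0 then (1:ℝ) else 0) m
    rw [if_neg (Nat.succ_ne_zero k)]
    exact hasDerivAt_const m _
  · intro k
    refine ⟨1, one_pos, fun m hm => ?_⟩
    show |(if k = 0 then (1:ℝ) else 0)| ≤ 1 * m ^ ((0:ℝ) - (k:ℝ))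
    rcases Nat.eq_zero_or_pos k with hk | hk
    · subst hk
      rw [if_pos rfl]
      rw [show ((0:ℝ) - ((0:ℕ):ℝ)) = 0 by norm_num, Real.rpow_zero]
      norm_num
    · rw [if_neg (Nat.pos_iff_ne_zero.mp hk)]
      have hp : (0:ℝ) < m ^ ((0:ℝ) - (k:ℝ)) := Real.rpow_pos_of_pos (by linarith) _
      simp only [abs_zero, one_mul]
      linarith

noncomputable def fam (θ : ℝ) (B : ℕ → ℝ → ℝ) : ℕ → ℕ → ℝ → ℝ
  | 0 => B
  | (j+1) => shiftD (θ + j) (fam θ B j)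

lemma fam_good {e θ : ℝ} {B : ℕ → ℝ → ℝ} (hB : Good e B) (hθ : 0 ≤ θ) :
    ∀ j : ℕ, Good (e + j) (fam θ B j) := by
  intro j
  induction j with
  | zero => simpa [fam] using hB
  | succ j ih =>
    have h := good_shift ih (by positivity : (0:ℝ) ≤ θ + j)
    have : e + ((j+1 : ℕ):ℝ) = e + (j:ℝ) + 1 := by push_cast; ring
    rw [show fam θ B (j+1) = shiftD (θ + j) (fam θ B j) from rfl, this]
    exact h

lemma fam_zero {θ : ℝ} {B : ℕ → ℝ → ℝ} (hθ : 0 < θ)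
    (hB0 : ∀ m : ℝ, 0 < m → B 0 m = Real.Gamma (m + θ) / Real.Gamma (m + 1)) :
    ∀ j : ℕ, ∀ m : ℝ, 0 < m → fam θ B j 0 m = Real.Gamma (m + θ + j) / Real.Gamma (m + 1) := by
  intro j
  induction j with
  | zero => intro m hm; simpa [fam] using hB0 m hm
  | succ j ih =>
    intro m hm
    have hpos : (0:ℝ) < m + θ + j := by positivity
    have : fam θ B (j+1) 0 m = (m + (θ + j)) * fam θ B j 0 m := by
      rw [show fam θ B (j+1) = shiftD (θ + j) (fam θ B j) from rfl, shiftD]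
      norm_num
    rw [this, ih m hm]
    have hΓ : Real.Gamma (m + θ + (j:ℝ) + 1) = (m + θ + j) * Real.Gamma (m + θ + j) :=
      Real.Gamma_add_one hpos.ne'
    have hcast : (m + θ + ((j+1 : ℕ):ℝ)) = m + θ + (j:ℝ) + 1 := by push_cast; ring
    rw [hcast, hΓ]
    ring


end FnuAux

open FnuAux

/-- Symbol-type estimates: `|∂ₘ^α F(m)| ≤ C m^{2ν-1-α}` for `m ≥ 1`. -/
theorem Fnu_iteratedDeriv_bound (ν : ℝ) (hν : 0 < ν) (α : ℕ) :
    ∃ C : ℝ, 0 < C ∧ ∀ m : ℝ, 1 ≤ m →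
      |iteratedDeriv α (Fnu ν) m| ≤ C * m ^ (2 * ν - 1 - α) := by
  set n : ℕ := ⌈2 * ν⌉₊ - 1 with hn
  have h2ν : (0:ℝ) < 2 * ν := by linarith
  have hn1 : 1 ≤ ⌈2 * ν⌉₊ := Nat.one_le_ceil_iff.mpr h2ν
  have hcast : ((n:ℝ)) = (⌈2 * ν⌉₊ : ℝ) - 1 := by
    rw [hn, Nat.cast_sub hn1]; norm_num
  set θ : ℝ := 2 * ν - n with hθdef
  have hθpos : 0 < θ := by
    rw [hθdef, hcast]
    have := Nat.ceil_lt_add_one h2ν.le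
    linarith
  have hθle : θ ≤ 1 := by
    rw [hθdef, hcast]
    have := Nat.le_ceil (2 * ν)
    linarith
  -- obtain the base family
  obtain ⟨B, hBg, hB0⟩ : ∃ B : ℕ → ℝ → ℝ, Good (θ - 1) B ∧
      ∀ m : ℝ, 0 < m → B 0 m = Real.Gamma (m + θ) / Real.Gamma (m + 1) := by
    rcases lt_or_eq_of_le hθle with hθ1 | hθ1
    · exact ⟨fun k m => (Real.Gamma (1 - θ))⁻¹ * J θ k m, good_base hθpos hθ1,
        fun m hm => base_zero hθpos hθ1 hm⟩
    · refine ⟨fun k _ => if k = 0 then (1:ℝ) else 0, ?_, ?_⟩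
      · have h0 : θ - 1 = 0 := by rw [hθ1]; ring
        rw [h0]
        exact good_one
      · intro m hm
        have hΓ : Real.Gamma (m + 1) ≠ 0 := (Real.Gamma_pos_of_pos (by linarith)).ne'
        rw [hθ1, div_self hΓ]
        norm_num
  have hDg : Good (θ - 1 + n) (fam θ B n) := fam_good hBg hθpos.le n
  have hD0 : ∀ m : ℝ, 0 < m → fam θ B n 0 m = Real.Gamma (m + 2 * ν) / Real.Gamma (m + 1) := by
    intro m hm
    rw [fam_zero hθpos hB0 n m hm]
    congr 2
    rw [hθdef]; ring
  set c : ℝ := ν⁻¹ * (Real.Gamma (ν + 1 / 2) / (Real.sqrt Real.pi * Real.Gamma ν)) *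
    (Real.Gamma (2 * ν))⁻¹ with hc
  have hE : ∀ k, ∀ m : ℝ, 1/2 < m →
      HasDerivAt (fun x => c * fam θ B n k x) (c * fam θ B n (k+1) m) m :=
    fun k m hm => (hDg.1 k m hm).const_mul c
  have hf : ∀ m : ℝ, 1/2 < m → Fnu ν m = c * fam θ B n 0 m := by
    intro m hm
    rw [hD0 m (by linarith), Fnu, hc]
    ring
  have hiter := iteratedDeriv_eq_of_family hE hf α
  obtain ⟨C, hC, hb⟩ := hDg.2 α
  have hc0 : 0 < c := by
    rw [hc]
    have h1 := Real.Gamma_pos_of_pos (by linarith : (0:ℝ) < ν + 1/2)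
    have h2 := Real.Gamma_pos_of_pos hν
    have h3 := Real.Gamma_pos_of_pos h2ν
    have h4 := Real.sqrt_pos.mpr Real.pi_pos
    positivity
  refine ⟨c * C, by positivity, fun m hm => ?_⟩
  rw [hiter m (by linarith)]
  rw [abs_mul, abs_of_nonneg hc0.le]
  have hexp : θ - 1 + (n:ℝ) - (α:ℝ) = 2 * ν - 1 - (α:ℝ) := by
    rw [hθdef]; ring
  calc c * |fam θ B n α m| ≤ c * (C * m ^ (θ - 1 + (n:ℝ) - (α:ℝ))) :=
        mul_le_mul_of_nonneg_left (hb m hm) hc0.le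
    _ = c * C * m ^ (2 * ν - 1 - (α:ℝ)) := by rw [hexp]; ring
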